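/- In the distinguished pre-Nichols algebra B̃(HV₁), the element z₄ := x₄⁶ satisfies (ad_c x) z₄ = 0 for every generator x ∈ {x₁, x₂, x₃, x₄}; in particular x_i x₄⁶ = q₁⁶ x₄⁶ x_i for all i ∈ {1,2,3} and x₄ commutes with x₄⁶. -/
import Mathlib


/-- `z_h = x_h x₄ − q₁ x₄ x_h` (here `y` plays the role of `x₄` and the first
three generators are indexed by `ZMod 3`, with `x₃ = x 0`, so that `x 3 = x₃`). -/
def zz {k : Type*} [Field k] {A : Type*} [Ring A] [Algebra k A]
    (q1 : k) (x : ZMod 3 → A) (y : A) (h : ZMod 3) : A :=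
  x h * y - q1 • (y * x h)

/-- `u_{ij} = (ad_c x_i) z_j = x_i z_j + q₁ z_{2i−j} x_i`. -/
def uu {k : Type*} [Field k] {A : Type*} [Ring A] [Algebra k A]
    (q1 : k) (x : ZMod 3 → A) (y : A) (i j : ZMod 3) : A :=
  x i * zz q1 x y j + q1 • (zz q1 x y (2 * i - j) * x i)

/-- in the distinguished pre-Nichols algebra `B̃(HV₁)`, the element
`z₄ = x₄⁶` satisfies `(ad_c x) z₄ = 0` for every generator: since
`g_i · x₄⁶ = q₁⁶ x₄⁶` and `g₄ · x₄⁶ = x₄⁶`, this says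
`x_i x₄⁶ − q₁⁶ x₄⁶ x_i = 0` for `i ∈ {1,2,3}` and `x₄ x₄⁶ − x₄⁶ x₄ = 0`;
in particular `x_i x₄⁶ = q₁⁶ x₄⁶ x_i` and `x₄` commutes with `x₄⁶`. -/
theorem ad_z4_zero {k : Type*} [Field k] [CharZero k]
    (ω q1 q2 : k) (hω : ω ^ 3 = 1) (hω1 : ω ≠ 1) (hq : q1 * q2 = -ω)
    {A : Type*} [Ring A] [Algebra k A] (x : ZMod 3 → A) (y : A)
    (hx2 : ∀ i : ZMod 3, x i ^ 2 = 0)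
    (hs1 : x 1 * x 2 + x 3 * x 1 + x 2 * x 3 = 0)
    (hs2 : x 2 * x 1 + x 1 * x 3 + x 3 * x 2 = 0)
    (hu2 : uu q1 x y 2 1 = ω • uu q1 x y 1 3)
    (hu3 : uu q1 x y 3 1 = ω • uu q1 x y 1 2)
    (hz : ∀ h : ZMod 3, y * zz q1 x y h = q2 • (zz q1 x y h * y)) :
    (∀ i : ZMod 3, x i * y ^ 6 - q1 ^ 6 • (y ^ 6 * x i) = 0) ∧
    (y * y ^ 6 - y ^ 6 * y = 0) ∧
    (∀ i : ZMod 3, x i * y ^ 6 = q1 ^ 6 • (y ^ 6 * x i)) ∧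
    Commute y (y ^ 6) := by
  have key : ∀ i : ZMod 3, x i * y ^ 6 = q1 ^ 6 • (y ^ 6 * x i) := by
    intro i
    set z : A := zz q1 x y i with hzdef
    have hz' : y * z = q2 • (z * y) := hz i
    -- y^n commutes past z with factor q2^n
    have pow_z : ∀ n : ℕ, y ^ n * z = q2 ^ n • (z * y ^ n) := by
      intro n
      induction n with
      | zero => simp
      | succ n ih =>
        calc y ^ (n + 1) * z = y ^ n * (y * z) := by rw [pow_succ, mul_assoc]
          _ = y ^ n * (q2 • (z * y)) := by rw [hz']
          _ = q2 • (y ^ n * z * y) := by rw [mul_smul_comm, mul_assoc]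
          _ = q2 • (q2 ^ n • (z * y ^ n) * y) := by rw [ih]
          _ = q2 ^ (n + 1) • (z * y ^ (n + 1)) := by
              rw [smul_mul_assoc, smul_smul, mul_assoc, ← pow_succ, ← pow_succ']
    have hxy : x i * y = z + q1 • (y * x i) := by
      simp [hzdef, zz]
    have main : ∀ n : ℕ, x i * y ^ (n + 1)
        = (∑ j ∈ Finset.range (n + 1), (q1 * q2) ^ j) • (z * y ^ n)
          + q1 ^ (n + 1) • (y ^ (n + 1) * x i) := by
      intro n
      induction n with
      | zero => simp [hxy]
      | succ n ih =>
        calc x i * y ^ (n + 2) = (x i * y ^ (n + 1)) * y := by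
              rw [mul_assoc, ← pow_succ]
          _ = ((∑ j ∈ Finset.range (n + 1), (q1 * q2) ^ j) • (z * y ^ n)
                + q1 ^ (n + 1) • (y ^ (n + 1) * x i)) * y := by rw [ih]
          _ = (∑ j ∈ Finset.range (n + 1), (q1 * q2) ^ j) • (z * y ^ (n + 1))
                + q1 ^ (n + 1) • (y ^ (n + 1) * (x i * y)) := by
              rw [add_mul, smul_mul_assoc, smul_mul_assoc, mul_assoc, ← pow_succ,
                mul_assoc]
          _ = (∑ j ∈ Finset.range (n + 1), (q1 * q2) ^ j) • (z * y ^ (n + 1))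
                + q1 ^ (n + 1) • (y ^ (n + 1) * z
                    + q1 • (y ^ (n + 2) * x i)) := by
              rw [hxy]
              congr 2
              rw [mul_add, mul_smul_comm, ← mul_assoc, ← pow_succ]
          _ = (∑ j ∈ Finset.range (n + 2), (q1 * q2) ^ j) • (z * y ^ (n + 1))
                + q1 ^ (n + 2) • (y ^ (n + 2) * x i) := by
              rw [pow_z]
              conv_rhs => rw [Finset.sum_range_succ]
              module
    have hsum : (∑ j ∈ Finset.range 6, (q1 * q2) ^ j) = 0 := by
      rw [hq]
      have : ∑ j ∈ Finset.range 6, (-ω) ^ j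
          = 1 - ω + ω ^ 2 - ω ^ 3 + ω ^ 4 - ω ^ 5 := by
        simp [Finset.sum_range_succ]; ring
      rw [this]
      linear_combination (-ω ^ 2 + ω - 1) * hω
    have := main 5
    rw [hsum, zero_smul, zero_add] at this
    exact this
  have hc : Commute y (y ^ 6) := (Commute.refl y).pow_right 6
  exact ⟨fun i => sub_eq_zero_of_eq (key i), sub_eq_zero_of_eq hc, key, hc⟩
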